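/- arXiv:2204.07393 — 3 statements merged into one kernel-verified Lean document; each statement's English description precedes it below -/
import Mathlib

section
/- Let A₀ be a non-unital associative algebra over a field of characteristic 0, and suppose A₀ is generated (as a non-unital associative algebra) by a Lie subalgebra 𝔥 ⊆ A₀ that is finite-dimensional and nilpotent as a Lie algebra. If every element of 𝔥 is nilpotent in A₀, then A₀ is nilpotent, i.e., there exists d ∈ ℕ such that every product of d elements of A₀ is zero. -/
/-- `mulPow a n` is the `(n+1)`-st power of `a` in a (possibly non-unital) magma. -/
def mulPow {A : Type*} [Mul A] (a : A) : ℕ → A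
  | 0 => a
  | n + 1 => mulPow a n * a

/-- `mulList a l` is the product of `a` with the elements of `l`, in order. -/
def mulList {A : Type*} [Mul A] (a : A) : List A → A
  | [] => a
  | b :: l => mulList (a * b) l

/-- The lower central series of a Lie subalgebra `𝔥` (a submodule closed under the
commutator bracket) of a non-unital associative algebra, defined via the commutator
`⁅a, b⁆ = a * b - b * a`. -/
def lcs {k A : Type*} [Field k] [NonUnitalRing A] [Module k A]
    (𝔥 : Submodule k A) : ℕ → Submodule k A
  | 0 => 𝔥
  | n + 1 => Submodule.span k {x | ∃ a ∈ 𝔥, ∃ b ∈ lcs 𝔥 n, x = a * b - b * a}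

section lists
variable {A : Type*} [NonUnitalRing A]

lemma mulList_append (a : A) (t s : List A) :
    mulList a (t ++ s) = mulList (mulList a t) s := by
  induction t generalizing a with
  | nil => rfl
  | cons b t ih => simp [mulList, ih]

lemma mulList_mul (a b : A) (s : List A) :
    mulList (a * b) s = a * mulList b s := by
  induction s generalizing b with
  | nil => rfl
  | cons c s ih => simp only [mulList, mul_assoc, ih]

lemma mulList_add (a b : A) (s : List A) :
    mulList (a + b) s = mulList a s + mulList b s := by
  induction s generalizing a b with
  | nil => rfl
  | cons c s ih => simp only [mulList, add_mul, ih]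

lemma mulList_zero (s : List A) : mulList (0 : A) s = 0 := by
  induction s with
  | nil => rfl
  | cons c s ih => simp only [mulList, zero_mul, ih]

lemma mulList_smul {k : Type*} [Field k] [Module k A] [IsScalarTower k A A]
    (c : k) (a : A) (s : List A) : mulList (c • a) s = c • mulList a s := by
  induction s generalizing a with
  | nil => rfl
  | cons b s ih => simp only [mulList, smul_mul_assoc, ih]

/-- product of a nonempty list; 0 on the empty list. -/
def prodA : List A → A
  | [] => 0
  | a :: t => mulList a t

lemma prodA_append {u v : List A} (hu : u ≠ []) (hv : v ≠ []) :
    prodA (u ++ v) = prodA u * prodA v := by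
  obtain ⟨a, u, rfl⟩ := List.exists_cons_of_ne_nil hu
  obtain ⟨b, v, rfl⟩ := List.exists_cons_of_ne_nil hv
  simp only [prodA, List.cons_append, mulList_append, mulList, ← mulList_mul]

lemma prodA_slot_add (u v : List A) (x y : A) :
    prodA (u ++ (x + y) :: v) = prodA (u ++ x :: v) + prodA (u ++ y :: v) := by
  cases u with
  | nil => simpa [prodA] using mulList_add x y v
  | cons a u =>
    simp only [prodA, List.cons_append, mulList_append, mulList, mul_add, mulList_add]

lemma prodA_slot_smul {k : Type*} [Field k] [Module k A] [IsScalarTower k A A]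
    [SMulCommClass k A A] (u v : List A) (c : k) (x : A) :
    prodA (u ++ (c • x) :: v) = c • prodA (u ++ x :: v) := by
  cases u with
  | nil => simpa [prodA] using mulList_smul c x v
  | cons a u =>
    simp only [prodA, List.cons_append, mulList_append, mulList, mul_smul_comm, mulList_smul]

lemma prodA_slot_zero (u v : List A) :
    prodA (u ++ (0 : A) :: v) = 0 := by
  cases u with
  | nil => simpa [prodA] using mulList_zero v
  | cons a u =>
    simp only [prodA, List.cons_append, mulList_append, mulList, mul_zero, mulList_zero]

lemma prodA_merge (u v : List A) (x y : A) :
    prodA (u ++ x :: y :: v) = prodA (u ++ (x * y) :: v) := by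
  cases u with
  | nil => simp [prodA, mulList]
  | cons a u =>
    simp only [prodA, List.cons_append, mulList_append, mulList, mul_assoc]

lemma prodA_zero_mid (u r v : List A) (hr : r ≠ []) (h : prodA r = 0) :
    prodA (u ++ r ++ v) = 0 := by
  have h1 : prodA (u ++ r) = 0 := by
    cases u with
    | nil => simpa using h
    | cons a u => rw [prodA_append (by simp) hr, h, mul_zero]
  cases v with
  | nil => simpa using h1
  | cons b v =>
    rw [prodA_append (by simp [hr]) (by simp), h1, zero_mul]

lemma prodA_replicate_succ (a : A) (d : ℕ) :
    prodA (List.replicate (d + 1) a) = mulPow a d := by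
  induction d with
  | zero => rfl
  | succ d ih =>
    rw [List.replicate_succ' (n := d+1), prodA_append (by simp) (by simp), ih]
    rfl
end lists

section sortstuff
variable {L : Type*} [LinearOrder L]

/-- number of inversions -/
def invCount : List L → ℕ
  | [] => 0
  | a :: t => t.countP (fun b => decide (b < a)) + invCount t

lemma invCount_append (u s : List L) :
    invCount (u ++ s) = invCount u + invCount s
      + (u.map (fun a => s.countP (fun b => decide (b < a)))).sum := by
  induction u with
  | nil => simp [invCount]
  | cons a u ih =>
    simp only [List.cons_append, invCount, List.append_eq, List.countP_append, ih,
      List.map_cons, List.sum_cons]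
    ring

lemma invCount_cross_perm {s₁ s₂ : List L} (h : s₁.Perm s₂) (u : List L) :
    (u.map (fun a => s₁.countP (fun b => decide (b < a)))).sum
      = (u.map (fun a => s₂.countP (fun b => decide (b < a)))).sum := by
  congr 1
  exact List.map_congr_left fun a _ => h.countP_eq _

lemma invCount_swap (u v : List L) {a b : L} (hba : b < a) :
    invCount (u ++ b :: a :: v) + 1 = invCount (u ++ a :: b :: v) := by
  have hperm : (b :: a :: v).Perm (a :: b :: v) := List.Perm.swap _ _ _
  rw [invCount_append, invCount_append, invCount_cross_perm hperm]
  have h1 : invCount (b :: a :: v) + 1 = invCount (a :: b :: v) := by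
    simp only [invCount, List.countP_cons]
    have : ¬ (a < b) := not_lt.2 hba.le
    simp [hba, this]
    omega
  omega

lemma invCount_le_sq (l : List L) : invCount l ≤ l.length * l.length := by
  induction l with
  | nil => simp [invCount]
  | cons a t ih =>
    have h1 : t.countP (fun b => decide (b < a)) ≤ t.length := List.countP_le_length
    simp only [invCount, List.length_cons]
    nlinarith

lemma exists_adjacent_inversion {l : List L} (h : ¬ l.Pairwise (· ≤ ·)) :
    ∃ u a b v, l = u ++ a :: b :: v ∧ b < a := by
  induction l with
  | nil => exact absurd List.Pairwise.nil h
  | cons a t ih =>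
    cases t with
    | nil => exact absurd (List.pairwise_singleton _ a) h
    | cons b t =>
      by_cases hab : a ≤ b
      · have h2 : ¬ (b :: t).Pairwise (· ≤ ·) := by
          intro hs
          refine h (List.pairwise_cons.2 ⟨fun c hc => ?_, hs⟩)
          rcases List.mem_cons.1 hc with rfl | h'
          · exact hab
          · exact le_trans hab ((List.pairwise_cons.1 hs).1 c h')
        obtain ⟨u, x, y, v, huv, hxy⟩ := ih h2
        exact ⟨a :: u, x, y, v, by rw [huv, List.cons_append], hxy⟩
      · exact ⟨[], a, b, t, rfl, not_le.1 hab⟩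

lemma sorted_run : ∀ {l : List L}, l.Pairwise (· ≤ ·) → ∀ x : L,
    ∃ u v, l = u ++ List.replicate (l.count x) x ++ v ∧ x ∉ u ∧ x ∉ v := by
  intro l
  induction l with
  | nil => exact fun _ x => ⟨[], [], by simp, by simp, by simp⟩
  | cons a t ih =>
    intro hs x
    obtain ⟨u, v, ht, hxu, hxv⟩ := ih hs.of_cons x
    by_cases hax : x = a
    · subst hax
      rcases Nat.eq_zero_or_pos (t.count x) with hc | hc
      · refine ⟨[], u ++ v, ?_, by simp, ?_⟩
        · simp only [List.count_cons_self, hc, List.nil_append]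
          rw [List.replicate_succ, List.replicate_zero] at *
          simp only [hc, List.replicate_zero, List.append_nil, List.nil_append] at ht ⊢
          rw [ht]
          simp
        · simp [hxu, hxv]
      · have hu : u = [] := by
          cases u with
          | nil => rfl
          | cons h u' =>
            exfalso
            have hxt : x ∈ t := List.count_pos_iff.1 hc
            have hax : x ≤ h := by
              have := (List.pairwise_cons.1 hs).1 h (by rw [ht]; simp)
              exact this
            have hhx : h ≤ x := by
              rw [ht] at hs
              have hs' : (h :: (u' ++ (List.replicate (t.count x) x ++ v))).Pairwise (· ≤ ·) := by
                simpa using hs.of_cons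
              refine (List.pairwise_cons.1 hs').1 x ?_
              simp [List.mem_replicate, hc.ne', List.mem_append]
            have hhxe : h = x := le_antisymm hhx hax
            subst hhxe
            exact hxu List.mem_cons_self
        subst hu
        refine ⟨[], v, ?_, by simp, hxv⟩
        simp only [List.nil_append] at ht ⊢
        rw [List.count_cons_self, List.replicate_succ, ht]
        simp [List.count_eq_zero.2 hxv]
    · refine ⟨a :: u, v, ?_, ?_, hxv⟩
      · rw [List.count_cons_of_ne (Ne.symm hax), ht]
        simp [List.count_eq_zero.2 hxv, List.count_eq_zero.2 hxu]
      · simp [hxu, hax]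
end sortstuff

section lcsfacts
variable {k A : Type*} [Field k] [NonUnitalRing A] [Module k A]
  [IsScalarTower k A A] [SMulCommClass k A A]
  {𝔥 : Submodule k A} (hbr : ∀ a ∈ 𝔥, ∀ b ∈ 𝔥, a * b - b * a ∈ 𝔥)

include hbr

lemma lcs_succ_le : ∀ n, lcs 𝔥 (n + 1) ≤ lcs 𝔥 n := by
  intro n
  induction n with
  | zero =>
    rw [show lcs 𝔥 1 = Submodule.span k {x | ∃ a ∈ 𝔥, ∃ b ∈ lcs 𝔥 0, x = a * b - b * a} from rfl]
    refine Submodule.span_le.2 ?_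
    rintro x ⟨a, ha, b, hb, rfl⟩
    exact hbr a ha b hb
  | succ n ih =>
    rw [show lcs 𝔥 (n+2) = Submodule.span k
      {x | ∃ a ∈ 𝔥, ∃ b ∈ lcs 𝔥 (n+1), x = a * b - b * a} from rfl]
    refine Submodule.span_le.2 ?_
    rintro x ⟨a, ha, b, hb, rfl⟩
    exact Submodule.subset_span ⟨a, ha, b, ih hb, rfl⟩

lemma lcs_antitone : ∀ {i j : ℕ}, i ≤ j → lcs 𝔥 j ≤ lcs 𝔥 i := by
  intro i j hij
  induction j with
  | zero => simp_all
  | succ n ih =>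
    rcases Nat.lt_or_ge i (n+1) with h | h
    · exact le_trans (lcs_succ_le hbr n) (ih (Nat.lt_succ_iff.1 h))
    · have : i = n + 1 := le_antisymm (by omega) h
      subst this; exact le_rfl

lemma lcs_le_h (n : ℕ) : lcs 𝔥 n ≤ 𝔥 := lcs_antitone hbr (Nat.zero_le n)

lemma lcs_bracket0 (i : ℕ) {a h : A} (ha : a ∈ lcs 𝔥 i) (hh : h ∈ 𝔥) :
    a * h - h * a ∈ lcs 𝔥 (i + 1) := by
  have h1 : h * a - a * h ∈ lcs 𝔥 (i + 1) := Submodule.subset_span ⟨h, hh, a, ha, rfl⟩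
  have := (lcs 𝔥 (i + 1)).neg_mem h1
  simpa [neg_sub] using this

lemma lcs_bracket : ∀ j i, ∀ a ∈ lcs 𝔥 i, ∀ b ∈ lcs 𝔥 j, a * b - b * a ∈ lcs 𝔥 (i + j + 1) := by
  intro j
  induction j with
  | zero => intro i a ha b hb; exact lcs_bracket0 hbr i ha (by exact hb)
  | succ j ih =>
    intro i a ha b hb
    have hspan : b ∈ Submodule.span k {x | ∃ h ∈ 𝔥, ∃ c ∈ lcs 𝔥 j, x = h * c - c * h} := hb
    clear hb
    induction hspan using Submodule.span_induction with
    | mem x hx =>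
      obtain ⟨h, hh, c, hc, rfl⟩ := hx
      have e1 : a * (h * c - c * h) - (h * c - c * h) * a
          = ((a * h - h * a) * c - c * (a * h - h * a))
            + (h * (a * c - c * a) - (a * c - c * a) * h) := by
        noncomm_ring
      rw [e1]
      refine (lcs 𝔥 (i + (j+1) + 1)).add_mem ?_ ?_
      · have t1 : a * h - h * a ∈ lcs 𝔥 (i + 1) := lcs_bracket0 hbr i ha hh
        have t2 := ih (i + 1) _ t1 c hc
        have harith : i + 1 + j + 1 = i + (j + 1) + 1 := by omega
        rw [harith] at t2
        exact t2
      · have t3 : a * c - c * a ∈ lcs 𝔥 (i + j + 1) := ih i a ha c hc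
        exact Submodule.subset_span ⟨h, hh, _, t3, rfl⟩
    | zero => simpa using (lcs 𝔥 (i + (j+1) + 1)).zero_mem
    | add x y hx hy px py =>
      have : a * (x + y) - (x + y) * a = (a * x - x * a) + (a * y - y * a) := by noncomm_ring
      rw [this]; exact (lcs 𝔥 _).add_mem px py
    | smul c x hx px =>
      have : a * (c • x) - (c • x) * a = c • (a * x - x * a) := by
        rw [mul_smul_comm, smul_mul_assoc, smul_sub]
      rw [this]; exact (lcs 𝔥 _).smul_mem c px
end lcsfacts

lemma weight_eq_sum_count {L : Type*} [Fintype L] [DecidableEq L] (w : L → ℕ) (ℓ : List L) :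
    (ℓ.map w).sum = ∑ l : L, ℓ.count l * w l := by
  induction ℓ with
  | nil => simp
  | cons a t ih =>
    simp only [List.map_cons, List.sum_cons, ih, List.count_cons, add_mul]
    rw [Finset.sum_add_distrib]
    simp only [ite_mul, one_mul, zero_mul, beq_iff_eq, Finset.sum_ite_eq, Finset.mem_univ,
      if_true]
    omega

lemma length_le_weight {L : Type*} (w : L → ℕ) (h1 : ∀ l : L, 1 ≤ w l) (ℓ : List L) :
    ℓ.length ≤ (ℓ.map w).sum := by
  induction ℓ with
  | nil => simp
  | cons a t ih =>
    simp only [List.length_cons, List.map_cons, List.sum_cons]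
    have := h1 a
    omega

section key
variable {k A : Type*} [Field k] [NonUnitalRing A] [Module k A]
  [IsScalarTower k A A] [SMulCommClass k A A]
  {L : Type*} [Fintype L] [LinearOrder L]

lemma key_lemma (ε : L → A) (w D : L → ℕ)
    (h1 : ∀ l : L, 1 ≤ w l)
    (h2 : ∀ l : L, prodA (List.replicate (D l + 1) (ε l)) = 0)
    (h3 : ∀ a b : L, ε a * ε b - ε b * ε a ∈
      Submodule.span k {x | ∃ c : L, w c = w a + w b ∧ x = ε c}) :
    ∀ ℓ : List L, (∑ l : L, D l * w l) < (ℓ.map w).sum → prodA (ℓ.map ε) = 0 := by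
  classical
  set W := ∑ l : L, D l * w l with hW
  set P : ℕ → Submodule k A := fun n => Submodule.span k
    {x | ∃ ℓ : List L, x = prodA (ℓ.map ε) ∧ n ≤ (ℓ.map w).sum ∧ ℓ ≠ [] ∧
      ℓ.Pairwise (· ≤ ·)} with hP
  have Pmono : ∀ {n n' : ℕ}, n ≤ n' → P n' ≤ P n := by
    intro n n' h
    exact Submodule.span_mono (fun x ⟨ℓ, hx, hw, hne, hs⟩ => ⟨ℓ, hx, le_trans h hw, hne, hs⟩)
  -- sorted lists of large weight have zero product
  have sorted_zero : ∀ ℓ : List L, ℓ.Pairwise (· ≤ ·) → W < (ℓ.map w).sum →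
      prodA (ℓ.map ε) = 0 := by
    intro ℓ hs hw
    have hpigeon : ∃ l : L, D l + 1 ≤ ℓ.count l := by
      by_contra hcon
      push_neg at hcon
      have : (ℓ.map w).sum ≤ W := by
        rw [weight_eq_sum_count, hW]
        exact Finset.sum_le_sum fun l _ => Nat.mul_le_mul_right _ (by have := hcon l; omega)
      omega
    obtain ⟨l, hl⟩ := hpigeon
    obtain ⟨u, v, huv, -, -⟩ := sorted_run hs l
    obtain ⟨e, he⟩ : ∃ e, ℓ.count l = (D l + 1) + e := ⟨ℓ.count l - (D l + 1), by omega⟩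
    rw [he, List.replicate_add] at huv
    have hmap : ℓ.map ε = (u.map ε) ++ (List.replicate (D l + 1) (ε l))
        ++ ((List.replicate e l ++ v).map ε) := by
      rw [huv, List.replicate_add]
      simp [List.map_append, List.map_replicate, List.append_assoc, List.replicate_succ',
        List.singleton_append]
    rw [hmap]
    exact prodA_zero_mid _ _ _ (by simp) (h2 l)
  -- main straightening induction
  have main : ∀ N : ℕ, ∀ ℓ : List L, ℓ.length ^ 3 + invCount ℓ ≤ N → ℓ ≠ [] →
      prodA (ℓ.map ε) ∈ P ((ℓ.map w).sum) := by
    intro N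
    induction N with
    | zero =>
      intro ℓ hμ hne
      exfalso
      have h0 : 1 ≤ ℓ.length := List.length_pos_iff.2 hne
      have h1 : 1 ≤ ℓ.length ^ 3 := Nat.one_le_pow 3 _ (by omega)
      omega
    | succ N ih =>
      intro ℓ hμ hne
      by_cases hs : ℓ.Pairwise (· ≤ ·)
      · exact Submodule.subset_span ⟨ℓ, rfl, le_rfl, hne, hs⟩
      · obtain ⟨u, a, b, v, huv, hba⟩ := exists_adjacent_inversion hs
        subst huv
        have hmapeq : (u ++ a :: b :: v).map ε
            = u.map ε ++ ε a :: ε b :: v.map ε := by simp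
        -- split the product
        have hsplit : prodA ((u ++ a :: b :: v).map ε)
            = prodA ((u ++ b :: a :: v).map ε)
              + prodA (u.map ε ++ (ε a * ε b - ε b * ε a) :: v.map ε) := by
          rw [hmapeq, prodA_merge]
          have : ε a * ε b = ε b * ε a + (ε a * ε b - ε b * ε a) := by abel
          rw [this, prodA_slot_add, ← prodA_merge]
          simp
        rw [hsplit]
        refine (P _).add_mem ?_ ?_
        · -- swapped term
          have hperm : (u ++ b :: a :: v).Perm (u ++ a :: b :: v) :=
            (List.Perm.swap _ _ _).append_left u
          have hwe : ((u ++ b :: a :: v).map w).sum = ((u ++ a :: b :: v).map w).sum :=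
            (hperm.map w).sum_eq
          have hlen : (u ++ b :: a :: v).length = (u ++ a :: b :: v).length := hperm.length_eq
          have hinv := invCount_swap u v hba
          have hμ' : (u ++ b :: a :: v).length ^ 3 + invCount (u ++ b :: a :: v) ≤ N := by
            rw [hlen]
            omega
          have := ih _ hμ' (by simp)
          rw [hwe] at this
          exact this
        · -- commutator term
          have hbr3 := h3 a b
          have goalmem : ∀ x ∈ Submodule.span k
              {x | ∃ c : L, w c = w a + w b ∧ x = ε c},
              prodA (u.map ε ++ x :: v.map ε) ∈ P (((u ++ a :: b :: v).map w).sum) := by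
            intro x hx
            induction hx using Submodule.span_induction with
            | mem x hxs =>
              obtain ⟨c, hwc, rfl⟩ := hxs
              have hmapc : (u ++ c :: v).map ε = u.map ε ++ ε c :: v.map ε := by simp
              rw [← hmapc]
              have hwc' : ((u ++ c :: v).map w).sum = ((u ++ a :: b :: v).map w).sum := by
                simp only [List.map_append, List.sum_append, List.map_cons, List.sum_cons]
                omega
              have hμ'' : (u ++ c :: v).length ^ 3 + invCount (u ++ c :: v) ≤ N := by
                have hinvle := invCount_le_sq (u ++ c :: v)
                have hl1 : (u ++ c :: v).length = u.length + v.length + 1 := by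
                  simp only [List.length_append, List.length_cons]; omega
                have hl2 : (u ++ a :: b :: v).length = u.length + v.length + 2 := by
                  simp only [List.length_append, List.length_cons]; omega
                rw [hl1] at hinvle ⊢
                rw [hl2] at hμ
                nlinarith
              have := ih _ hμ'' (by simp)
              rw [hwc'] at this
              exact this
            | zero => rw [prodA_slot_zero]; exact (P _).zero_mem
            | add x y hx hy px py => rw [prodA_slot_add]; exact (P _).add_mem px py
            | smul c x hx px => rw [prodA_slot_smul]; exact (P _).smul_mem c px
          exact goalmem _ hbr3
  -- conclude
  intro ℓ hw
  have hne : ℓ ≠ [] := by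
    intro h
    rw [h] at hw
    simp at hw
  have hmem := main _ ℓ le_rfl hne
  have hPbot : P ((ℓ.map w).sum) = ⊥ := by
    rw [hP]
    refine le_bot_iff.1 (Submodule.span_le.2 ?_)
    rintro x ⟨ℓ', rfl, hw', hne', hs'⟩
    have : prodA (ℓ'.map ε) = 0 := sorted_zero ℓ' hs' (by omega)
    simp [this]
  rw [hPbot] at hmem
  simpa using hmem
end key

section QQ
variable {k A L : Type*} [Field k] [NonUnitalRing A] [Module k A]
  [IsScalarTower k A A] [SMulCommClass k A A]

/-- span of products of at least `r` letters -/
def QQ (k : Type*) {A L : Type*} [Field k] [NonUnitalRing A] [Module k A] (ε : L → A)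
    (r : ℕ) : Submodule k A :=
  Submodule.span k {x | ∃ ℓ : List L, x = prodA (ℓ.map ε) ∧ r ≤ ℓ.length}

lemma QQ_anti (ε : L → A) {r s : ℕ} (h : r ≤ s) : QQ k ε s ≤ QQ k ε r :=
  Submodule.span_mono fun x ⟨ℓ, hx, hl⟩ => ⟨ℓ, hx, le_trans h hl⟩

lemma QQ_mul (ε : L → A) {r s : ℕ} (hr : 1 ≤ r) (hs : 1 ≤ s) {x y : A}
    (hx : x ∈ QQ k ε r) (hy : y ∈ QQ k ε s) : x * y ∈ QQ k ε (r + s) := by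
  induction hx using Submodule.span_induction with
  | mem x hxs =>
    induction hy using Submodule.span_induction with
    | mem y hys =>
      obtain ⟨ℓ, rfl, hl⟩ := hxs
      obtain ⟨ℓ', rfl, hl'⟩ := hys
      refine Submodule.subset_span ⟨ℓ ++ ℓ', ?_, by simp only [List.length_append]; omega⟩
      rw [List.map_append, prodA_append (by simp [← List.length_pos_iff]; omega)
        (by simp [← List.length_pos_iff]; omega)]
    | zero => rw [mul_zero]; exact (QQ k ε (r+s)).zero_mem
    | add y z hy hz py pz => rw [mul_add]; exact (QQ k ε (r+s)).add_mem py pz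
    | smul c y hy py => rw [mul_smul_comm]; exact (QQ k ε (r+s)).smul_mem c py
  | zero => rw [zero_mul]; exact (QQ k ε (r+s)).zero_mem
  | add x z hx hz px pz => rw [add_mul]; exact (QQ k ε (r+s)).add_mem px pz
  | smul c x hx px => rw [smul_mul_assoc]; exact (QQ k ε (r+s)).smul_mem c px

lemma QQ_mulList (ε : L → A) : ∀ (lst : List A) (a : A) (r : ℕ), 1 ≤ r →
    a ∈ QQ k ε r → (∀ b ∈ lst, b ∈ QQ k ε 1) → mulList a lst ∈ QQ k ε (r + lst.length) := by
  intro lst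
  induction lst with
  | nil => intro a r _ ha _; simpa [mulList] using ha
  | cons b t ih =>
    intro a r hr ha hb
    have h1 : a * b ∈ QQ k ε (r + 1) := QQ_mul ε hr le_rfl ha (hb b (by simp))
    have h2 := ih (a * b) (r + 1) (by omega) h1 (fun c hc => hb c (by simp [hc]))
    show mulList (a * b) t ∈ QQ k ε (r + (t.length + 1))
    have : r + 1 + t.length = r + (t.length + 1) := by omega
    rw [← this]
    exact h2
end QQ

theorem stmt5 {k A₀ : Type*} [Field k] [CharZero k] [NonUnitalRing A₀]
    [Module k A₀] [IsScalarTower k A₀ A₀] [SMulCommClass k A₀ A₀]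
    -- 𝔥 is a Lie subalgebra of A₀: a subspace closed under the commutator bracket
    (𝔥 : Submodule k A₀) (hbr : ∀ a ∈ 𝔥, ∀ b ∈ 𝔥, a * b - b * a ∈ 𝔥)
    -- 𝔥 is finite-dimensional and nilpotent as a Lie algebra
    [FiniteDimensional k 𝔥] (hnilLie : ∃ m : ℕ, lcs 𝔥 m = ⊥)
    -- A₀ is generated by 𝔥 as a non-unital associative algebra
    (hgen : NonUnitalAlgebra.adjoin k (𝔥 : Set A₀) = ⊤)
    -- every element of 𝔥 is nilpotent in A₀
    (hnil : ∀ a ∈ 𝔥, ∃ d : ℕ, mulPow a d = 0) :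
    -- then A₀ is nilpotent: every product of d + 1 elements vanishes, for some d
    ∃ d : ℕ, ∀ f : Fin (d + 1) → A₀,
      mulList (f 0) (List.ofFn fun i : Fin d => f i.succ) = 0 := by
  classical
  obtain ⟨m, hm⟩ := hnilLie
  have hbot : ∀ n, m ≤ n → lcs 𝔥 n = ⊥ := fun n hn => le_bot_iff.1 (hm ▸ lcs_antitone hbr hn)
  have hfg : ∀ i : Fin m, ∃ S : Finset A₀, Submodule.span k ↑S = lcs 𝔥 i := by
    intro i
    have hle : lcs 𝔥 i ≤ 𝔥 := lcs_le_h hbr i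
    have : FiniteDimensional k (lcs 𝔥 i) := Submodule.finiteDimensional_of_le hle
    exact (Submodule.fg_iff_finiteDimensional _).2 this
  choose S hS using hfg
  letI : LinearOrder (Σ i : Fin m, {x : A₀ // x ∈ S i}) :=
    LinearOrder.lift' (Fintype.equivFin _) (Fintype.equivFin _).injective
  set ε : (Σ i : Fin m, {x : A₀ // x ∈ S i}) → A₀ := fun l => l.2.1 with hεdef
  set w : (Σ i : Fin m, {x : A₀ // x ∈ S i}) → ℕ := fun l => (l.1 : ℕ) + 1 with hwdef
  have hε_mem : ∀ l, ε l ∈ lcs 𝔥 l.1 := fun l => (hS l.1) ▸ Submodule.subset_span l.2.2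
  have hε𝔥 : ∀ l, ε l ∈ 𝔥 := fun l => lcs_le_h hbr _ (hε_mem l)
  have hnil' : ∀ l, ∃ d : ℕ, mulPow (ε l) d = 0 := fun l => hnil _ (hε𝔥 l)
  choose D hD using hnil'
  have h1 : ∀ l, 1 ≤ w l := fun l => by simp [hwdef]
  have h2 : ∀ l, prodA (List.replicate (D l + 1) (ε l)) = 0 := fun l => by
    rw [prodA_replicate_succ]; exact hD l
  have h3 : ∀ a b, ε a * ε b - ε b * ε a ∈
      Submodule.span k {x | ∃ c, w c = w a + w b ∧ x = ε c} := by
    intro a b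
    have hmem := lcs_bracket hbr b.1 a.1 _ (hε_mem a) _ (hε_mem b)
    set t : ℕ := (a.1 : ℕ) + (b.1 : ℕ) + 1 with ht
    by_cases htm : t < m
    · rw [← hS ⟨t, htm⟩] at hmem
      refine Submodule.span_mono ?_ hmem
      intro x hx
      exact ⟨⟨⟨t, htm⟩, ⟨x, hx⟩⟩, by simp [hwdef]; omega, rfl⟩
    · rw [hbot t (by omega)] at hmem
      rw [Submodule.mem_bot] at hmem
      rw [hmem]
      exact Submodule.zero_mem _
  have key := key_lemma ε w D h1 h2 h3
  set W : ℕ := ∑ l, D l * w l with hWdef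
  have hQbot : QQ k ε (W + 1) = ⊥ := by
    refine le_bot_iff.1 (Submodule.span_le.2 ?_)
    rintro x ⟨ℓ, rfl, hl⟩
    have hwl : ℓ.length ≤ (ℓ.map w).sum := length_le_weight w h1 ℓ
    have := key ℓ (by omega)
    simp [this]
  have h𝔥Q : ∀ x ∈ 𝔥, x ∈ QQ k ε 1 := by
    intro x hx
    rcases Nat.eq_zero_or_pos m with hm0 | hm0
    · subst hm0
      have : x = 0 := by
        have : 𝔥 = ⊥ := hm
        rw [this] at hx
        simpa using hx
      rw [this]; exact Submodule.zero_mem _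
    · have h𝔥S : 𝔥 = Submodule.span k ↑(S ⟨0, hm0⟩) := (hS ⟨0, hm0⟩).symm
      rw [h𝔥S] at hx
      refine Submodule.span_mono ?_ hx
      intro s hs
      exact ⟨[⟨⟨0, hm0⟩, ⟨s, hs⟩⟩], rfl, by simp⟩
  have hTop : ∀ x : A₀, x ∈ QQ k ε 1 := by
    intro x
    have hmul : ∀ a b : A₀, a ∈ QQ k ε 1 → b ∈ QQ k ε 1 → a * b ∈ QQ k ε 1 :=
      fun a b ha hb => QQ_anti ε (by omega) (QQ_mul ε le_rfl le_rfl ha hb)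
    have hadj : NonUnitalAlgebra.adjoin k (𝔥 : Set A₀)
        ≤ (QQ k ε 1).toNonUnitalSubalgebra hmul :=
      NonUnitalAlgebra.adjoin_le h𝔥Q
    have : x ∈ NonUnitalAlgebra.adjoin k (𝔥 : Set A₀) := by
      rw [hgen]; trivial
    exact hadj this
  refine ⟨W, fun f => ?_⟩
  have hmem : mulList (f 0) (List.ofFn fun i : Fin W => f i.succ) ∈ QQ k ε (1 + W) := by
    have := QQ_mulList ε (List.ofFn fun i : Fin W => f i.succ) (f 0) 1 le_rfl (hTop _)
      (fun b _ => hTop b)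
    rwa [List.length_ofFn] at this
  rw [show (1 : ℕ) + W = W + 1 by omega, hQbot, Submodule.mem_bot] at hmem
  exact hmem
end

section
/- Let B be a complex unital Banach algebra with norm ‖·‖, let V be a complex linear subspace of B, and suppose there exists d ∈ ℕ such that (e^b − 1)^d = 0 for every b ∈ V. Then there exist constants C > 0 and α > 0 such that ‖e^b‖ ≤ C(1 + ‖b‖)^α for every b ∈ V. -/
open NormedSpace in
lemma aux_norm_exp_sub_one_le {B : Type*} [NormedRing B] [NormedAlgebra ℂ B] [CompleteSpace B]
    (c : B) (hc : ‖c‖ ≤ 1) : ‖exp c - 1‖ ≤ 2 := by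
  have hsum : Summable (fun n : ℕ => ((n.factorial : ℂ))⁻¹ • c ^ n) := expSeries_summable' (𝕂 := ℂ) c
  have hnorm : Summable (fun n : ℕ => ‖((n.factorial : ℂ))⁻¹ • c ^ n‖) := norm_expSeries_summable' c
  have hnorm' : Summable (fun n : ℕ => ‖(((n+1).factorial : ℂ))⁻¹ • c ^ (n + 1)‖) :=
    hnorm.comp_injective Nat.succ_injective
  have hshift : exp c - 1 = ∑' n : ℕ, (((n+1).factorial : ℂ))⁻¹ • c ^ (n + 1) := by
    rw [exp_eq_tsum ℂ]
    beta_reduce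
    rw [hsum.tsum_eq_zero_add]
    simp
  rw [hshift]
  have hbound : ∀ n : ℕ, ‖(((n+1).factorial : ℂ))⁻¹ • c ^ (n + 1)‖ ≤ ((1 : ℝ) / 2) ^ n := by
    intro n
    have h1 : ‖(((n+1).factorial : ℂ))⁻¹ • c ^ (n + 1)‖ ≤ (((n+1).factorial : ℝ))⁻¹ * ‖c‖ ^ (n + 1) := by
      rw [norm_smul, norm_inv]
      gcongr
      · simp
      · exact norm_pow_le' c n.succ_pos
    have h2 : ‖c‖ ^ (n + 1) ≤ 1 := pow_le_one₀ (norm_nonneg c) hc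
    have h3 : ((2 : ℝ)) ^ n ≤ ((n+1).factorial : ℝ) := by
      exact_mod_cast (by simpa [Nat.add_comm] using
        Nat.factorial_mul_pow_le_factorial (m := 1) (n := n) : 2 ^ n ≤ (n+1).factorial)
    have h4 : (((n+1).factorial : ℝ))⁻¹ ≤ ((1 : ℝ) / 2) ^ n := by
      rw [one_div, inv_pow]
      exact inv_anti₀ (by positivity) h3
    calc ‖(((n+1).factorial : ℂ))⁻¹ • c ^ (n + 1)‖ ≤ (((n+1).factorial : ℝ))⁻¹ * ‖c‖ ^ (n + 1) := h1
      _ ≤ (((n+1).factorial : ℝ))⁻¹ * 1 := by gcongr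
      _ = (((n+1).factorial : ℝ))⁻¹ := mul_one _
      _ ≤ ((1 : ℝ) / 2) ^ n := h4
  calc ‖∑' n : ℕ, (((n+1).factorial : ℂ))⁻¹ • c ^ (n + 1)‖
      ≤ ∑' n : ℕ, ‖(((n+1).factorial : ℂ))⁻¹ • c ^ (n + 1)‖ := norm_tsum_le_tsum_norm hnorm'
    _ ≤ ∑' n : ℕ, ((1 : ℝ) / 2) ^ n := hnorm'.tsum_le_tsum hbound summable_geometric_two
    _ = 2 := tsum_geometric_two

open NormedSpace in
theorem stmt10 {B : Type*} [NormedRing B] [NormedAlgebra ℂ B] [CompleteSpace B]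
    (V : Submodule ℂ B) (d : ℕ) (h : ∀ b ∈ V, (exp b - 1) ^ d = 0) :
    ∃ C > (0 : ℝ), ∃ α > (0 : ℝ), ∀ b ∈ V, ‖exp b‖ ≤ C * (1 + ‖b‖) ^ α := by
  rcases Nat.eq_zero_or_pos d with rfl | hd
  · have h1 : (1 : B) = 0 := by simpa using h 0 V.zero_mem
    refine ⟨1, one_pos, 1, one_pos, fun b _ => ?_⟩
    have hz : exp b = 0 := by
      calc exp b = exp b * 1 := (mul_one _).symm
        _ = 0 := by rw [h1, mul_zero]
    rw [hz, norm_zero]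
    positivity
  · have hd' : (0 : ℝ) < d := by exact_mod_cast hd
    refine ⟨(d : ℝ) * (‖(1 : B)‖ + 1) ^ 2 * 4 ^ d,
      by apply mul_pos (mul_pos hd' (by positivity)) (by positivity),
      (d : ℝ), hd', fun b hb => ?_⟩
    set k : ℕ := ⌈‖b‖⌉₊ + 1 with hkdef
    have hk0 : (0 : ℝ) < (k : ℝ) := by positivity
    have hkC : ((k : ℂ)) ≠ 0 := Nat.cast_ne_zero.mpr (Nat.succ_ne_zero _)
    set c : B := ((k : ℂ))⁻¹ • b with hcdef
    have hcV : c ∈ V := V.smul_mem _ hb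
    have hb' : b = (k : ℕ) • c := by
      rw [← Nat.cast_smul_eq_nsmul ℂ, hcdef, smul_smul, mul_inv_cancel₀ hkC, one_smul]
    have hkb : ‖b‖ ≤ (k : ℝ) := by
      calc ‖b‖ ≤ (⌈‖b‖⌉₊ : ℝ) := Nat.le_ceil _
        _ ≤ (k : ℝ) := by exact_mod_cast Nat.le_succ _
    have hcle : ‖c‖ ≤ 1 := by
      rw [hcdef, norm_smul, norm_inv]
      have h1 : ‖((k : ℂ))‖ = (k : ℝ) := by simp
      rw [h1, inv_mul_le_iff₀ hk0, mul_one]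
      exact hkb
    set N : B := exp c - 1 with hNdef
    have hN : N ^ d = 0 := h c hcV
    have hNle : ‖N‖ ≤ 2 := aux_norm_exp_sub_one_le c hcle
    have hexp : exp b = (N + 1) ^ k := by
      letI : NormedAlgebra ℚ B := NormedAlgebra.restrictScalars ℚ ℂ B
      rw [hb', exp_nsmul]
      congr 1
      rw [hNdef, sub_add_cancel]
    have hpow : (N + 1) ^ k = ∑ m ∈ Finset.range (k + 1),
        N ^ m * 1 ^ (k - m) * (k.choose m : B) := (Commute.one_right N).add_pow k
    -- restrict the sum to m < d
    have hrestrict : ∑ m ∈ Finset.range (k + 1), N ^ m * 1 ^ (k - m) * (k.choose m : B)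
        = ∑ m ∈ (Finset.range (k + 1)).filter (· < d),
            N ^ m * 1 ^ (k - m) * (k.choose m : B) := by
      refine (Finset.sum_filter_of_ne ?_).symm
      intro x hx hfx
      by_contra hxd
      push_neg at hxd
      apply hfx
      have hNx : N ^ x = 0 := by
        rw [show x = d + (x - d) from (Nat.add_sub_cancel' hxd).symm, pow_add, hN, zero_mul]
      rw [hNx, zero_mul, zero_mul]
    -- per-term bound
    set K : ℝ := (‖(1 : B)‖ + 1) ^ 2 * 2 ^ d * (k : ℝ) ^ d with hKdef
    have hterm : ∀ m ∈ (Finset.range (k + 1)).filter (· < d),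
        ‖N ^ m * 1 ^ (k - m) * (k.choose m : B)‖ ≤ K := by
      intro m hm
      have hmd : m < d := (Finset.mem_filter.mp hm).2
      have hNm : ‖N ^ m‖ ≤ (‖(1 : B)‖ + 1) * 2 ^ m := by
        rcases Nat.eq_zero_or_pos m with rfl | hm1
        · simp only [pow_zero, mul_one]
          linarith [norm_nonneg (1 : B)]
        · calc ‖N ^ m‖ ≤ ‖N‖ ^ m := norm_pow_le' N hm1
            _ ≤ 2 ^ m := pow_le_pow_left₀ (norm_nonneg N) hNle m
            _ ≤ (‖(1 : B)‖ + 1) * 2 ^ m := by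
                nlinarith [norm_nonneg (1 : B), pow_pos (zero_lt_two (α := ℝ)) m]
      have hcast : ‖(k.choose m : B)‖ ≤ (k.choose m : ℝ) * ‖(1 : B)‖ := by
        have : ‖(k.choose m) • (1 : B)‖ ≤ (k.choose m : ℝ) * ‖(1 : B)‖ := norm_nsmul_le
        simpa [nsmul_eq_mul] using this
      have hchoose : (k.choose m : ℝ) ≤ (k : ℝ) ^ d := by
        calc (k.choose m : ℝ) ≤ ((k ^ m : ℕ) : ℝ) := by exact_mod_cast Nat.choose_le_pow k m
          _ = (k : ℝ) ^ m := by push_cast; ring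
          _ ≤ (k : ℝ) ^ d := by
              have hk1 : (1 : ℝ) ≤ (k : ℝ) := by
                exact_mod_cast Nat.one_le_iff_ne_zero.mpr (Nat.succ_ne_zero _)
              exact pow_le_pow_right₀ hk1 hmd.le
      calc ‖N ^ m * 1 ^ (k - m) * (k.choose m : B)‖
          = ‖N ^ m * (k.choose m : B)‖ := by rw [one_pow, mul_one]
        _ ≤ ‖N ^ m‖ * ‖(k.choose m : B)‖ := norm_mul_le _ _
        _ ≤ ((‖(1 : B)‖ + 1) * 2 ^ m) * ((k.choose m : ℝ) * ‖(1 : B)‖) := by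
            apply mul_le_mul hNm hcast (norm_nonneg _)
            positivity
        _ ≤ ((‖(1 : B)‖ + 1) * 2 ^ d) * ((k : ℝ) ^ d * (‖(1 : B)‖ + 1)) := by
            have h2m : (2 : ℝ) ^ m ≤ 2 ^ d := by
              apply pow_le_pow_right₀ one_le_two hmd.le
            apply mul_le_mul (by gcongr <;> linarith [norm_nonneg (1 : B)])
              (mul_le_mul hchoose (by linarith [norm_nonneg (1 : B)]) (norm_nonneg _)
                (by positivity)) (by positivity) (by positivity)
        _ = K := by rw [hKdef]; ring
    have hcard : ((Finset.range (k + 1)).filter (· < d)).card ≤ d := by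
      calc ((Finset.range (k + 1)).filter (· < d)).card
          ≤ (Finset.range d).card := by
            apply Finset.card_le_card
            intro x hx
            exact Finset.mem_range.mpr (Finset.mem_filter.mp hx).2
        _ = d := Finset.card_range d
    have hKpos : 0 ≤ K := by rw [hKdef]; positivity
    have hmain : ‖exp b‖ ≤ (d : ℝ) * K := by
      rw [hexp, hpow, hrestrict]
      calc ‖∑ m ∈ (Finset.range (k + 1)).filter (· < d),
            N ^ m * 1 ^ (k - m) * (k.choose m : B)‖
          ≤ ∑ m ∈ (Finset.range (k + 1)).filter (· < d),
            ‖N ^ m * 1 ^ (k - m) * (k.choose m : B)‖ := norm_sum_le _ _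
        _ ≤ (((Finset.range (k + 1)).filter (· < d)).card : ℝ) * K := by
            rw [← nsmul_eq_mul]
            exact Finset.sum_le_card_nsmul _ _ K hterm
        _ ≤ (d : ℝ) * K := by
            apply mul_le_mul_of_nonneg_right _ hKpos
            exact_mod_cast hcard
    -- bound k in terms of ‖b‖
    have hklt : (k : ℝ) ≤ 2 * (1 + ‖b‖) := by
      have := Nat.ceil_lt_add_one (norm_nonneg b)
      have hkr : (k : ℝ) = (⌈‖b‖⌉₊ : ℝ) + 1 := by push_cast [hkdef]; ring
      rw [hkr]
      linarith [norm_nonneg b]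
    have hfinal : (d : ℝ) * K ≤ (d : ℝ) * (‖(1 : B)‖ + 1) ^ 2 * 4 ^ d * (1 + ‖b‖) ^ d := by
      rw [hKdef]
      have hkd : (k : ℝ) ^ d ≤ (2 * (1 + ‖b‖)) ^ d := by
        gcongr
      calc (d : ℝ) * ((‖(1 : B)‖ + 1) ^ 2 * 2 ^ d * (k : ℝ) ^ d)
          ≤ (d : ℝ) * ((‖(1 : B)‖ + 1) ^ 2 * 2 ^ d * (2 * (1 + ‖b‖)) ^ d) := by
            gcongr
        _ = (d : ℝ) * (‖(1 : B)‖ + 1) ^ 2 * 4 ^ d * (1 + ‖b‖) ^ d := by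
            rw [mul_pow, show (4 : ℝ) = 2 * 2 by norm_num, mul_pow]
            ring
    have hrpow : ((1 : ℝ) + ‖b‖) ^ (d : ℝ) = (1 + ‖b‖) ^ d := by
      rw [Real.rpow_natCast]
    rw [hrpow]
    exact hmain.trans hfinal
end

section
/- Let 𝔤 be the 2-dimensional non-abelian complex Lie algebra (with basis e₁, e₂ satisfying [e₁, e₂] = e₂). Then for every complex unital Banach algebra B and every unital algebra homomorphism θ : U(𝔤) → B with dense range, B is a PI-algebra. -/
set_option maxHeartbeats 1000000
set_option synthInstance.maxHeartbeats 400000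


/-- An associative unital algebra `A` over `R` satisfies a polynomial identity if there is a
nonzero noncommutative polynomial vanishing under every evaluation in `A`. -/
def IsPIAlgebra (R A : Type*) [CommSemiring R] [Semiring A] [Algebra R A] : Prop :=
  ∃ (n : ℕ) (p : FreeAlgebra R (Fin n)), p ≠ 0 ∧
    ∀ f : Fin n → A, FreeAlgebra.lift R f p = 0

open UniversalEnvelopingAlgebra
attribute [local instance 100] LieRing.ofAssociativeRing

/-- The universal enveloping algebra is generated, as an algebra, by the image of `ι`. -/
lemma uea_adjoin_range_ι_eq_top (R L : Type*) [CommRing R] [LieRing L] [LieAlgebra R L] :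
    Algebra.adjoin R (Set.range (ι R : L →ₗ⁅R⁆ UniversalEnvelopingAlgebra R L)) = ⊤ := by
  set S := Algebra.adjoin R
    (Set.range (ι R : L →ₗ⁅R⁆ UniversalEnvelopingAlgebra R L)) with hSdef
  let ι' : L →ₗ⁅R⁆ S :=
    { toFun := fun x => ⟨ι R x, Algebra.subset_adjoin ⟨x, rfl⟩⟩
      map_add' := fun x y => Subtype.ext ((ι R : L →ₗ⁅R⁆ _).toLinearMap.map_add x y)
      map_smul' := fun c x => Subtype.ext ((ι R : L →ₗ⁅R⁆ _).toLinearMap.map_smul c x)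
      map_lie' := fun {x y} => Subtype.ext (by
        have := (ι R : L →ₗ⁅R⁆ UniversalEnvelopingAlgebra R L).map_lie x y
        rw [Ring.lie_def] at this
        simpa [Ring.lie_def] using this) }
  have key : S.val.comp (lift R ι') = AlgHom.id R _ := by
    apply hom_ext
    ext x
    simp only [LieHom.coe_comp, Function.comp_apply, AlgHom.coe_toLieHom, AlgHom.coe_comp,
      AlgHom.id_apply]
    rw [lift_ι_apply]
    rfl
  rw [eq_top_iff]
  intro u _
  have hu : S.val ((lift R ι') u) = u := by
    have := congrArg (fun f => f u) (congrArg (DFunLike.coe) key)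
    simpa using this
  have := ((lift R ι') u).2
  rwa [← hu]

/-- A product of elements of the form `s * b` with `s` in a subalgebra `S` past which
`b` can be moved is of the form `t * b ^ length`. -/
lemma list_prod_smulb {B : Type*} [Ring B] {R : Type*} [CommRing R] [Algebra R B]
    (S : Subalgebra R B) (b : B)
    (hswap : ∀ x ∈ S, ∃ y ∈ S, b * x = y * b)
    (l : List B) (hl : ∀ x ∈ l, ∃ s ∈ S, x = s * b) :
    ∃ t ∈ S, l.prod = t * b ^ l.length := by
  induction l with
  | nil => exact ⟨1, one_mem S, by simp⟩
  | cons a l ih =>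
    obtain ⟨t, htS, ht⟩ := ih (fun x hx => hl x (List.mem_cons_of_mem a hx))
    obtain ⟨s, hsS, hs⟩ := hl a (List.mem_cons_self (a := a) (l := l))
    obtain ⟨y, hyS, hy⟩ := hswap t htS
    refine ⟨s * y, mul_mem hsS hyS, ?_⟩
    rw [List.prod_cons, List.length_cons, ht, hs, pow_succ']
    calc s * b * (t * b ^ l.length) = s * (b * t) * b ^ l.length := by noncomm_ring
      _ = s * (y * b) * b ^ l.length := by rw [hy]
      _ = s * y * (b * b ^ l.length) := by noncomm_ring

theorem stmt15 {𝔤 : Type*} [LieRing 𝔤] [LieAlgebra ℂ 𝔤]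
    -- 𝔤 is the 2-dimensional non-abelian complex Lie algebra:
    -- it has a basis e₀, e₁ with ⁅e₀, e₁⁆ = e₁
    (e : Module.Basis (Fin 2) ℂ 𝔤) (he : ⁅e 0, e 1⁆ = e 1)
    (B : Type*) [NormedRing B] [NormedAlgebra ℂ B] [CompleteSpace B]
    (θ : UniversalEnvelopingAlgebra ℂ 𝔤 →ₐ[ℂ] B) (hθ : DenseRange θ) :
    IsPIAlgebra ℂ B := by
  classical
  -- abbreviations
  set a : B := θ (ι ℂ (e 0)) with ha
  set b : B := θ (ι ℂ (e 1)) with hb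
  -- the commutation relation in B
  have hcomm : ∀ g h : 𝔤, θ (ι ℂ ⁅g, h⁆) = θ (ι ℂ g) * θ (ι ℂ h) - θ (ι ℂ h) * θ (ι ℂ g) := by
    intro g h
    have := (ι ℂ : 𝔤 →ₗ⁅ℂ⁆ UniversalEnvelopingAlgebra ℂ 𝔤).map_lie g h
    rw [Ring.lie_def] at this
    rw [this]
    simp
  have hab : a * b - b * a = b := by rw [← hcomm, he]
  -- brackets in 𝔤 land in ℂ • e 1
  have he' : ⁅e 1, e 0⁆ = -e 1 := by rw [← lie_skew, he]
  have hbr : ∀ g h : 𝔤, ⁅g, h⁆ =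
      (e.repr g 0 * e.repr h 1 - e.repr h 0 * e.repr g 1) • e 1 := by
    intro g h
    conv_lhs => rw [← e.sum_repr g, ← e.sum_repr h]
    simp only [Fin.sum_univ_two, add_lie, lie_add, smul_lie, lie_smul, lie_self, he, he',
      smul_zero, smul_neg, add_zero, zero_add, smul_smul]
    module
  -- a * b^k - b^k * a = k • b^k
  have hpow : ∀ k : ℕ, a * b ^ k - b ^ k * a = (k : ℂ) • b ^ k := by
    intro k
    induction k with
    | zero => simp
    | succ k ih =>
      have h1 : a * b ^ (k + 1) - b ^ (k + 1) * a
          = (a * b ^ k - b ^ k * a) * b + b ^ k * (a * b - b * a) := by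
        rw [pow_succ]; noncomm_ring
      rw [h1, ih, hab]
      push_cast
      rw [smul_mul_assoc, ← pow_succ, add_smul, one_smul]
  -- b is nilpotent
  set N : ℕ := ⌊2 * ‖a‖⌋₊ + 1 with hNdef
  have hN : 2 * ‖a‖ < (N : ℝ) := by
    have := Nat.lt_floor_add_one (2 * ‖a‖)
    push_cast
    exact_mod_cast this
  have hbN : b ^ N = 0 := by
    by_contra hne
    have hpos : 0 < ‖b ^ N‖ := norm_pos_iff.mpr hne
    have h1 : ‖(N : ℂ) • b ^ N‖ = (N : ℝ) * ‖b ^ N‖ := by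
      rw [norm_smul, Complex.norm_natCast]
    have h2 : ‖a * b ^ N - b ^ N * a‖ ≤ 2 * ‖a‖ * ‖b ^ N‖ := by
      calc ‖a * b ^ N - b ^ N * a‖ ≤ ‖a * b ^ N‖ + ‖b ^ N * a‖ := norm_sub_le _ _
        _ ≤ ‖a‖ * ‖b ^ N‖ + ‖b ^ N‖ * ‖a‖ := add_le_add (norm_mul_le _ _) (norm_mul_le _ _)
        _ = 2 * ‖a‖ * ‖b ^ N‖ := by ring
    rw [hpow N, h1] at h2
    nlinarith
  -- the dense subalgebra
  set S : Subalgebra ℂ B := θ.range with hSdef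
  have hadj : S = Algebra.adjoin ℂ (⇑θ '' Set.range (ι ℂ : 𝔤 →ₗ⁅ℂ⁆ _)) := by
    rw [← AlgHom.map_adjoin, uea_adjoin_range_ι_eq_top, Algebra.map_top]
  -- moving b past elements of S
  have hswap : ∀ x ∈ S, ∃ y ∈ S, b * x = y * b := by
    intro x hx
    rw [hadj] at hx
    induction hx using Algebra.adjoin_induction with
    | mem x hx =>
      obtain ⟨_, ⟨g, rfl⟩, rfl⟩ := hx
      refine ⟨θ (ι ℂ g) + (-(e.repr g 0)) • 1, ?_, ?_⟩
      · exact add_mem ⟨ι ℂ g, rfl⟩ (SMulMemClass.smul_mem _ (one_mem S))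
      · have h1 : ⁅e 1, g⁆ = (-(e.repr g 0)) • e 1 := by
          rw [hbr (e 1) g]
          congr 1
          simp [Finsupp.single_apply]
        have h2 := hcomm (e 1) g
        rw [h1] at h2
        rw [map_smul, map_smul] at h2
        rw [← hb] at h2
        have : b * θ (ι ℂ g) = θ (ι ℂ g) * b + (-(e.repr g 0)) • b := by
          rw [h2]; abel
        rw [this, add_mul, smul_mul_assoc, one_mul]
    | algebraMap r =>
      exact ⟨algebraMap ℂ B r, algebraMap_mem S r, (Algebra.commutes r b).symm⟩
    | add x x' hx hx' ihx ihx' =>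
      obtain ⟨y, hyS, hy⟩ := ihx
      obtain ⟨y', hy'S, hy'⟩ := ihx'
      exact ⟨y + y', add_mem hyS hy'S, by rw [mul_add, hy, hy', add_mul]⟩
    | mul x x' hx hx' ihx ihx' =>
      obtain ⟨y, hyS, hy⟩ := ihx
      obtain ⟨y', hy'S, hy'⟩ := ihx'
      refine ⟨y * y', mul_mem hyS hy'S, ?_⟩
      calc b * (x * x') = (b * x) * x' := by noncomm_ring
        _ = y * (b * x') := by rw [hy, mul_assoc]
        _ = y * (y' * b) := by rw [hy']
        _ = y * y' * b := by noncomm_ring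
  -- commutators in S are of the form s * b
  have hcommS : ∀ x ∈ S, ∀ z ∈ S, ∃ s ∈ S, x * z - z * x = s * b := by
    intro x hx
    rw [hadj] at hx
    induction hx using Algebra.adjoin_induction with
    | mem x hx =>
      obtain ⟨_, ⟨g, rfl⟩, rfl⟩ := hx
      intro z hz
      rw [hadj] at hz
      induction hz using Algebra.adjoin_induction with
      | mem z hz =>
        obtain ⟨_, ⟨h, rfl⟩, rfl⟩ := hz
        refine ⟨(e.repr g 0 * e.repr h 1 - e.repr h 0 * e.repr g 1) • 1, SMulMemClass.smul_mem _ (one_mem S), ?_⟩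
        have h2 := hcomm g h
        rw [hbr g h] at h2
        rw [map_smul, map_smul] at h2
        rw [← hb] at h2
        rw [← h2, smul_mul_assoc, one_mul]
      | algebraMap r =>
        exact ⟨0, zero_mem S, by rw [Algebra.commutes r (θ (ι ℂ g))]; simp⟩
      | add z z' hz hz' ihz ihz' =>
        obtain ⟨s, hsS, hs⟩ := ihz
        obtain ⟨s', hs'S, hs'⟩ := ihz'
        refine ⟨s + s', add_mem hsS hs'S, ?_⟩
        have : θ (ι ℂ g) * (z + z') - (z + z') * θ (ι ℂ g)
            = (θ (ι ℂ g) * z - z * θ (ι ℂ g)) + (θ (ι ℂ g) * z' - z' * θ (ι ℂ g)) := by noncomm_ring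
        rw [this, hs, hs', add_mul]
      | mul z z' hz hz' ihz ihz' =>
        obtain ⟨s, hsS, hs⟩ := ihz
        obtain ⟨s', hs'S, hs'⟩ := ihz'
        have hzS : z ∈ S := by rw [hadj]; exact hz
        have hz'S : z' ∈ S := by rw [hadj]; exact hz'
        obtain ⟨y, hyS, hy⟩ := hswap z' hz'S
        refine ⟨z * s' + s * y, add_mem (mul_mem hzS hs'S) (mul_mem hsS hyS), ?_⟩
        have h3 : θ (ι ℂ g) * (z * z') - (z * z') * θ (ι ℂ g)
            = z * (θ (ι ℂ g) * z' - z' * θ (ι ℂ g)) + (θ (ι ℂ g) * z - z * θ (ι ℂ g)) * z' := by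
          simp only [mul_sub, sub_mul, mul_assoc]; abel
        rw [h3, hs, hs']
        calc z * (s' * b) + s * b * z' = z * (s' * b) + s * (b * z') := by noncomm_ring
          _ = z * (s' * b) + s * (y * b) := by rw [hy]
          _ = (z * s' + s * y) * b := by noncomm_ring
    | algebraMap r =>
      intro z hz
      exact ⟨0, zero_mem S, by rw [Algebra.commutes r z]; simp⟩
    | add x x' hx hx' ihx ihx' =>
      intro z hz
      obtain ⟨s, hsS, hs⟩ := ihx z hz
      obtain ⟨s', hs'S, hs'⟩ := ihx' z hz
      refine ⟨s + s', add_mem hsS hs'S, ?_⟩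
      have : (x + x') * z - z * (x + x') = (x * z - z * x) + (x' * z - z * x') := by noncomm_ring
      rw [this, hs, hs', add_mul]
    | mul x x' hx hx' ihx ihx' =>
      intro z hz
      obtain ⟨s, hsS, hs⟩ := ihx z hz
      obtain ⟨s', hs'S, hs'⟩ := ihx' z hz
      have hxS : x ∈ S := by rw [hadj]; exact hx
      have hx'S : x' ∈ S := by rw [hadj]; exact hx'
      obtain ⟨y, hyS, hy⟩ := hswap x' hx'S
      refine ⟨x * s' + s * y, add_mem (mul_mem hxS hs'S) (mul_mem hsS hyS), ?_⟩
      have h3 : (x * x') * z - z * (x * x')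
          = x * (x' * z - z * x') + (x * z - z * x) * x' := by
        simp only [mul_sub, sub_mul, mul_assoc]; abel
      rw [h3, hs, hs']
      calc x * (s' * b) + s * b * x' = x * (s' * b) + s * (b * x') := by noncomm_ring
        _ = x * (s' * b) + s * (y * b) := by rw [hy]
        _ = (x * s' + s * y) * b := by noncomm_ring
    -- the polynomial: a product of N commutators
  have hNle : ∀ i : Fin N, 2 * (i : ℕ) + 1 < 2 * N := fun i => by omega
  let i0 : Fin N → Fin (2 * N) := fun i => ⟨2 * i, by omega⟩
  let i1 : Fin N → Fin (2 * N) := fun i => ⟨2 * i + 1, hNle i⟩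
  let X : Fin (2 * N) → FreeAlgebra ℂ (Fin (2 * N)) := fun j => FreeAlgebra.ι ℂ j
  let p : FreeAlgebra ℂ (Fin (2 * N)) :=
    (List.ofFn fun i : Fin N => X (i0 i) * X (i1 i) - X (i1 i) * X (i0 i)).prod
  -- p is nonzero: witness evaluation in End ℂ ℂ[X]
  have hp0 : p ≠ 0 := by
    let D : Module.End ℂ (Polynomial ℂ) := Polynomial.derivative
    let M : Module.End ℂ (Polynomial ℂ) := LinearMap.mulLeft ℂ (Polynomial.X)
    have hDM : D * M - M * D = 1 := by
      apply LinearMap.ext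
      intro q
      simp [D, M, Module.End.mul_apply, LinearMap.mulLeft_apply, Polynomial.derivative_mul]
    let f : Fin (2 * N) → Module.End ℂ (Polynomial ℂ) := fun j => if j.val % 2 = 0 then D else M
    have hval : FreeAlgebra.lift ℂ f p = 1 := by
      rw [show p = _ from rfl, map_list_prod, List.map_ofFn]
      have hfn : ((fun x => (FreeAlgebra.lift ℂ f) x) ∘
          fun i : Fin N => X (i0 i) * X (i1 i) - X (i1 i) * X (i0 i)) = fun _ : Fin N => 1 := by
        funext i
        have h0 : f (i0 i) = D := by
          simp only [f, i0]
          rw [if_pos (by omega)]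
        have h1 : f (i1 i) = M := by
          simp only [f, i1]
          rw [if_neg (by omega)]
        simp only [Function.comp_apply, map_sub, map_mul, X, FreeAlgebra.lift_ι_apply, h0, h1]
        exact hDM
      rw [hfn]
      simp
    intro hp
    rw [hp, map_zero] at hval
    have := congrArg (fun (g : Module.End ℂ (Polynomial ℂ)) => g Polynomial.X) hval
    simp only [LinearMap.zero_apply, Module.End.one_apply] at this
    exact Polynomial.X_ne_zero (R := ℂ) this.symm
  -- evaluation map
  let F : (Fin (2 * N) → B) → B := fun f =>
    (List.ofFn fun i : Fin N => f (i0 i) * f (i1 i) - f (i1 i) * f (i0 i)).prod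
  have hlift : ∀ f : Fin (2 * N) → B, FreeAlgebra.lift ℂ f p = F f := by
    intro f
    rw [show p = _ from rfl, map_list_prod, List.map_ofFn]
    have hfn : ((fun x => (FreeAlgebra.lift ℂ f) x) ∘
        fun i : Fin N => X (i0 i) * X (i1 i) - X (i1 i) * X (i0 i))
        = fun i : Fin N => f (i0 i) * f (i1 i) - f (i1 i) * f (i0 i) := by
      funext i
      simp only [Function.comp_apply, map_sub, map_mul, X, FreeAlgebra.lift_ι_apply]
    rw [hfn]
  -- F vanishes on S-valued tuples
  have hF0 : ∀ f : Fin (2 * N) → B, (∀ j, f j ∈ S) → F f = 0 := by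
    intro f hf
    obtain ⟨t, htS, ht⟩ := list_prod_smulb S b hswap
      (List.ofFn fun i : Fin N => f (i0 i) * f (i1 i) - f (i1 i) * f (i0 i))
      (by
        intro x hx
        rw [List.mem_ofFn] at hx
        obtain ⟨i, rfl⟩ := hx
        exact hcommS (f (i0 i)) (hf (i0 i)) (f (i1 i)) (hf (i1 i)))
    show (List.ofFn fun i : Fin N => f (i0 i) * f (i1 i) - f (i1 i) * f (i0 i)).prod = 0
    rw [ht, List.length_ofFn, hbN, mul_zero]
  -- F is continuous and vanishes on a dense set, hence everywhere
  have hFcont : Continuous F := by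
    have : F = fun f => ((List.finRange N).map
        (fun i => f (i0 i) * f (i1 i) - f (i1 i) * f (i0 i))).prod := by
      funext f
      show (List.ofFn fun i : Fin N => f (i0 i) * f (i1 i) - f (i1 i) * f (i0 i)).prod = _
      rw [List.ofFn_eq_map]
    rw [this]
    apply continuous_list_prod
    intro i _
    exact (((continuous_apply (i0 i)).mul (continuous_apply (i1 i))).sub
      ((continuous_apply (i1 i)).mul (continuous_apply (i0 i))))
  have hdense : Dense {f : Fin (2 * N) → B | ∀ j, f j ∈ S} := by
    have hSd : Dense (S : Set B) := hθ.mono (fun x hx => hx)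
    have hd := dense_pi (s := fun _ : Fin (2 * N) => (S : Set B)) Set.univ (fun i _ => hSd)
    have : Set.univ.pi (fun _ : Fin (2 * N) => (S : Set B))
        = {f : Fin (2 * N) → B | ∀ j, f j ∈ S} := by
      ext f
      simp [Set.mem_pi]
    rwa [this] at hd
  have hFzero : F = fun _ => 0 := by
    apply Continuous.ext_on hdense hFcont continuous_const
    intro f hf
    exact hF0 f hf
  exact ⟨2 * N, p, hp0, fun f => by rw [hlift f, hFzero]⟩
end
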